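/- arXiv:1411.0279 — 9 statements merged into one kernel-verified Lean document; each statement's English description precedes it below -/
import Mathlib

section
/- For every instance of the CMLAPP there exists an optimal solution that is gap-free; that is, there exist an assortment S with |S| ≤ c and a position assignment σ : S → {1,…,N} with σ(S) = {1,…,|S|} such that U(S,σ) ≥ U(S',σ') for every assortment S' with |S'| ≤ c and every injective position assignment σ' : S' → {1,…,N}. -/
/-- Expected profit `U(S,σ)` of assortment `S` with position assignment `σ`:
products are `Fin N`, positions are `Fin N`, `θ p` is the visibility of
position `p`, `u i` the utility and `r i` the marginal profit of product `i`. -/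
noncomputable def expProfit {N : ℕ} (u r θ : Fin N → ℝ)
    (S : Finset (Fin N)) (σ : Fin N → Fin N) : ℝ :=
  ∑ i ∈ S, r i * (θ (σ i) * u i / (∑ j ∈ S, θ (σ j) * u j + 1))

lemma expProfit_eq {N : ℕ} (u r θ : Fin N → ℝ) (S : Finset (Fin N)) (σ : Fin N → Fin N) :
    expProfit u r θ S σ =
      (∑ i ∈ S, r i * (θ (σ i) * u i)) / (∑ j ∈ S, θ (σ j) * u j + 1) := by
  unfold expProfit
  rw [Finset.sum_div]
  exact Finset.sum_congr rfl fun i _ => (mul_div_assoc _ _ _).symm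

lemma frac_le_max (A B C s t : ℝ) (hB : 0 ≤ B) (hs : 0 ≤ s) (hst : s ≤ t) :
    (A + C * s) / (B + s + 1) ≤ max (A / (B + 1)) ((A + C * t) / (B + t + 1)) := by
  have d0 : (0:ℝ) < B + 1 := by linarith
  have ds : (0:ℝ) < B + s + 1 := by linarith
  have dt : (0:ℝ) < B + t + 1 := by linarith
  rcases le_total (C * (B + 1)) A with h | h
  · refine le_max_of_le_left ?_
    rw [div_le_div_iff₀ ds d0]
    nlinarith [mul_nonneg hs (sub_nonneg.2 h)]
  · refine le_max_of_le_right ?_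
    rw [div_le_div_iff₀ ds dt]
    nlinarith [mul_nonneg (sub_nonneg.2 hst) (sub_nonneg.2 h)]

lemma compress {N c : ℕ} (u r θ : Fin N → ℝ)
    (hu : ∀ i, 0 < u i) (hθ0 : ∀ i, 0 ≤ θ i)
    (hθ : ∀ i j : Fin N, i ≤ j → θ j ≤ θ i) :
    ∀ n (S : Finset (Fin N)) (σ : Fin N → Fin N),
      (∑ j ∈ S, (σ j : ℕ)) < n → S.card ≤ c → Set.InjOn σ ↑S →
      ∃ (S₂ : Finset (Fin N)) (σ₂ : Fin N → Fin N),
        S₂.card ≤ c ∧ Set.InjOn σ₂ ↑S₂ ∧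
        S₂.image σ₂ = Finset.univ.filter (fun p : Fin N => (p : ℕ) < S₂.card) ∧
        expProfit u r θ S σ ≤ expProfit u r θ S₂ σ₂ := by
  intro n
  induction n with
  | zero => intro S σ hΦ; omega
  | succ n ih =>
    intro S σ hΦ hcard hinj
    classical
    set k := S.card with hk
    have hkN : k ≤ N := by
      simpa using (Finset.card_le_univ S)
    set F : Finset (Fin N) := Finset.univ.filter (fun p : Fin N => (p : ℕ) < k) with hF
    have hFcard : F.card = k := by
      have : F = (Finset.range k).attachFin
          (fun m hm => lt_of_lt_of_le (Finset.mem_range.mp hm) hkN) := by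
        ext p
        simp [hF, Finset.mem_attachFin]
      rw [this, Finset.card_attachFin, Finset.card_range]
    by_cases hgap : S.image σ = F
    · exact ⟨S, σ, hcard, hinj, hgap, le_refl _⟩
    -- find a product placed at position ≥ k
    have himcard : (S.image σ).card = k := Finset.card_image_of_injOn hinj
    have hex : ∃ i ∈ S, k ≤ ((σ i : Fin N) : ℕ) := by
      by_contra hcon
      push_neg at hcon
      apply hgap
      apply Finset.eq_of_subset_of_card_le
      · intro q hq
        obtain ⟨i, hi, rfl⟩ := Finset.mem_image.mp hq
        simp [hF, hcon i hi]
      · rw [hFcard, himcard]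
    obtain ⟨i, hiS, hik⟩ := hex
    -- find a free position < k
    have hfree : ∃ p ∈ F, p ∉ S.image σ := by
      by_contra hcon
      push_neg at hcon
      have hsub : F ⊆ (S.image σ).erase (σ i) := by
        intro q hq
        refine Finset.mem_erase.2 ⟨?_, hcon q hq⟩
        intro hqe
        have : (q : ℕ) < k := by simpa [hF] using hq
        rw [hqe] at this; omega
      have := Finset.card_le_card hsub
      rw [Finset.card_erase_of_mem (Finset.mem_image_of_mem σ hiS), himcard, hFcard] at this
      have hk1 : 1 ≤ k := Finset.card_pos.mpr ⟨i, hiS⟩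
      omega
    obtain ⟨p, hpF, hpIm⟩ := hfree
    have hpk : (p : ℕ) < k := by simpa [hF] using hpF
    have hpσi : (p : ℕ) < ((σ i : Fin N) : ℕ) := lt_of_lt_of_le hpk hik
    have hk1 : 1 ≤ k := Finset.card_pos.mpr ⟨i, hiS⟩
    -- quantities
    set A₀ : ℝ := ∑ j ∈ S.erase i, r j * (θ (σ j) * u j) with hA₀
    set B₀ : ℝ := ∑ j ∈ S.erase i, θ (σ j) * u j with hB₀
    have hB₀0 : 0 ≤ B₀ := Finset.sum_nonneg fun j _ => mul_nonneg (hθ0 _) (hu j).le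
    set s : ℝ := θ (σ i) * u i with hs
    set t : ℝ := θ p * u i with ht
    have hs0 : 0 ≤ s := mul_nonneg (hθ0 _) (hu i).le
    have hst : s ≤ t := by
      have : θ (σ i) ≤ θ p := hθ p (σ i) (by rw [Fin.le_def]; omega)
      exact mul_le_mul_of_nonneg_right this (hu i).le
    set σ' : Fin N → Fin N := Function.update σ i p with hσ'
    -- rewrite the three profits
    have hsumr : ∀ τ : Fin N → Fin N, (∀ j ∈ S.erase i, τ j = σ j) →
        (∑ j ∈ S, r j * (θ (τ j) * u j)) =
          (∑ j ∈ S.erase i, r j * (θ (σ j) * u j)) + r i * (θ (τ i) * u i) := by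
      intro τ hτ
      rw [← Finset.sum_erase_add S _ hiS]
      congr 1
      exact Finset.sum_congr rfl fun j hj => by rw [hτ j hj]
    have hsumw : ∀ τ : Fin N → Fin N, (∀ j ∈ S.erase i, τ j = σ j) →
        (∑ j ∈ S, θ (τ j) * u j) =
          (∑ j ∈ S.erase i, θ (σ j) * u j) + θ (τ i) * u i := by
      intro τ hτ
      rw [← Finset.sum_erase_add S _ hiS]
      congr 1
      exact Finset.sum_congr rfl fun j hj => by rw [hτ j hj]
    have hU : expProfit u r θ S σ = (A₀ + r i * s) / (B₀ + s + 1) := by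
      rw [expProfit_eq, hsumr σ (fun _ _ => rfl), hsumw σ (fun _ _ => rfl)]
    have hτ' : ∀ j ∈ S.erase i, σ' j = σ j := fun j hj =>
      Function.update_of_ne (Finset.ne_of_mem_erase hj) _ _
    have hU' : expProfit u r θ S σ' = (A₀ + r i * t) / (B₀ + t + 1) := by
      rw [expProfit_eq, hsumr σ' hτ', hsumw σ' hτ', hσ', Function.update_self]
    have hUe : expProfit u r θ (S.erase i) σ = A₀ / (B₀ + 1) := by
      rw [expProfit_eq]
    have hkey := frac_le_max A₀ B₀ (r i) s t hB₀0 hs0 hst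
    rw [← hU, ← hU', ← hUe] at hkey
    rcases le_max_iff.mp hkey with hle | hle
    · -- drop product i
      have hΦ' : (∑ j ∈ S.erase i, (σ j : ℕ)) < n := by
        have h1 : (∑ j ∈ S.erase i, ((σ j : Fin N) : ℕ)) + ((σ i : Fin N) : ℕ)
            = ∑ j ∈ S, ((σ j : Fin N) : ℕ) := Finset.sum_erase_add S _ hiS
        omega
      obtain ⟨S₂, σ₂, h1, h2, h3, h4⟩ := ih (S.erase i) σ hΦ'
        (le_trans (Finset.card_le_card (Finset.erase_subset _ _)) hcard)
        (hinj.mono (by simp [Finset.coe_subset, Finset.erase_subset]))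
      exact ⟨S₂, σ₂, h1, h2, h3, le_trans hle h4⟩
    · -- move product i to position p
      have hinj' : Set.InjOn σ' ↑S := by
        intro a ha b hb hab
        by_cases hai : a = i <;> by_cases hbi : b = i
        · rw [hai, hbi]
        · exfalso
          rw [hσ', hai, Function.update_self, Function.update_of_ne hbi] at hab
          exact hpIm (hab ▸ Finset.mem_image_of_mem σ hb)
        · exfalso
          rw [hσ', hbi, Function.update_self, Function.update_of_ne hai] at hab
          exact hpIm (hab ▸ Finset.mem_image_of_mem σ ha)
        · rw [hσ', Function.update_of_ne hai, Function.update_of_ne hbi] at hab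
          exact hinj ha hb hab
      have hΦ' : (∑ j ∈ S, (σ' j : ℕ)) < n := by
        have h1 : (∑ j ∈ S.erase i, ((σ j : Fin N) : ℕ)) + ((σ i : Fin N) : ℕ)
            = ∑ j ∈ S, ((σ j : Fin N) : ℕ) := Finset.sum_erase_add S _ hiS
        have h2 : (∑ j ∈ S.erase i, ((σ' j : Fin N) : ℕ)) + ((σ' i : Fin N) : ℕ)
            = ∑ j ∈ S, ((σ' j : Fin N) : ℕ) := Finset.sum_erase_add S _ hiS
        have h3 : (∑ j ∈ S.erase i, ((σ' j : Fin N) : ℕ)) =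
            (∑ j ∈ S.erase i, ((σ j : Fin N) : ℕ)) :=
          Finset.sum_congr rfl fun j hj => by rw [hτ' j hj]
        have h4 : ((σ' i : Fin N) : ℕ) = (p : ℕ) := by rw [hσ', Function.update_self]
        omega
      obtain ⟨S₂, σ₂, h1, h2, h3, h4⟩ := ih S σ' hΦ' hcard hinj'
      exact ⟨S₂, σ₂, h1, h2, h3, le_trans hle h4⟩

/-- every CMLAPP instance admits an optimal solution that is
gap-free, i.e. whose position assignment maps `S` bijectively onto the first
`|S|` positions. -/
theorem cmlapp_exists_gapfree_optimal (N c : ℕ) (hc : c ≤ N)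
    (u r θ : Fin N → ℝ)
    (hu : ∀ i, 0 < u i) (hθ0 : ∀ i, 0 ≤ θ i)
    (hθ : ∀ i j : Fin N, i ≤ j → θ j ≤ θ i) :
    ∃ (S : Finset (Fin N)) (σ : Fin N → Fin N),
      S.card ≤ c ∧ Set.InjOn σ ↑S ∧
      S.image σ = Finset.univ.filter (fun p : Fin N => (p : ℕ) < S.card) ∧
      ∀ (S' : Finset (Fin N)) (σ' : Fin N → Fin N),
        S'.card ≤ c → Set.InjOn σ' ↑S' →
        expProfit u r θ S' σ' ≤ expProfit u r θ S σ := by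
  classical
  set feas : Finset (Finset (Fin N) × (Fin N → Fin N)) :=
    Finset.univ.filter (fun P => P.1.card ≤ c ∧ Set.InjOn P.2 ↑P.1) with hfeas
  have hne : feas.Nonempty := by
    refine ⟨(∅, id), ?_⟩
    simp [hfeas, Set.InjOn]
  obtain ⟨P, hPmem, hPmax⟩ := Finset.exists_max_image feas
    (fun P => expProfit u r θ P.1 P.2) hne
  rw [hfeas, Finset.mem_filter] at hPmem
  obtain ⟨S, σ, h1, h2, h3, h4⟩ := compress u r θ hu hθ0 hθ
    ((∑ j ∈ P.1, ((P.2 j : Fin N) : ℕ)) + 1) P.1 P.2 (by omega) hPmem.2.1 hPmem.2.2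
  refine ⟨S, σ, h1, h2, h3, fun S' σ' hc' hi' => ?_⟩
  have := hPmax (S', σ') (by rw [hfeas, Finset.mem_filter]; exact ⟨Finset.mem_univ _, hc', hi'⟩)
  exact le_trans this h4
end

section
/- Suppose θ_1 ≥ θ_2 ≥ ⋯ ≥ θ_N > 0 and fix λ ∈ ℝ. For an assortment S define g(S) = max over bijections σ : S → {1,…,|S|} of Σ_{i∈S} θ_{σ(i)} u_i (r_i − λ). If S with |S| < c maximizes g over all assortments of size at most c, then u_i (r_i − λ) ≤ 0 for every product i ∉ S. -/
/-- if `S` with `|S| < c` maximizes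
`g(S) = max_{σ : S ↔ {1..|S|}} Σ_{i∈S} θ_{σ(i)} u_i (r_i − λ)` over all
assortments of size at most `c` (with `σ` a gap-free position assignment
witnessing the maximum), then `u_i (r_i − λ) ≤ 0` for every product `i ∉ S`. -/
theorem maximizer_small_implies_nonpos (N c : ℕ) (hc : c ≤ N)
    (u r θ : Fin N → ℝ)
    (hu : ∀ i, 0 < u i) (hθpos : ∀ i, 0 < θ i)
    (hθ : ∀ i j : Fin N, i ≤ j → θ j ≤ θ i) (lam : ℝ)
    (S : Finset (Fin N)) (hS : S.card < c)
    (σ : Fin N → Fin N) (hinj : Set.InjOn σ ↑S)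
    (himg : S.image σ = Finset.univ.filter (fun p : Fin N => (p : ℕ) < S.card))
    (hopt : ∀ (S' : Finset (Fin N)) (σ' : Fin N → Fin N),
      S'.card ≤ c → Set.InjOn σ' ↑S' →
      S'.image σ' = Finset.univ.filter (fun p : Fin N => (p : ℕ) < S'.card) →
      ∑ i ∈ S', θ (σ' i) * u i * (r i - lam) ≤
        ∑ i ∈ S, θ (σ i) * u i * (r i - lam)) :
    ∀ i : Fin N, i ∉ S → u i * (r i - lam) ≤ 0 := by
  intro i hi
  have hcard : S.card < N := lt_of_lt_of_le hS hc
  set p : Fin N := ⟨S.card, hcard⟩ with hp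
  set σ' : Fin N → Fin N := Function.update σ i p with hσ'
  have hσ'i : σ' i = p := by rw [hσ']; exact Function.update_self _ _ _
  have hupd : ∀ j ∈ S, σ' j = σ j := by
    intro j hj
    rw [hσ']
    exact Function.update_of_ne (by rintro rfl; exact hi hj) _ _
  have himgS : S.image σ' = S.image σ := by
    apply Finset.image_congr
    intro j hj; exact hupd j hj
  have hmem_lt : ∀ j ∈ S, ((σ j : ℕ)) < S.card := by
    intro j hj
    have : σ j ∈ S.image σ := Finset.mem_image_of_mem _ hj
    rw [himg, Finset.mem_filter] at this
    exact this.2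
  have hcardS' : (insert i S).card = S.card + 1 := Finset.card_insert_of_notMem hi
  have hinj' : Set.InjOn σ' ↑(insert i S) := by
    intro x hx y hy hxy
    simp only [Finset.coe_insert, Set.mem_insert_iff, Finset.mem_coe] at hx hy
    rcases hx with rfl | hx
    · rcases hy with rfl | hy
      · rfl
      · exfalso
        rw [hσ'i, hupd y hy] at hxy
        have := hmem_lt y hy
        rw [← hxy] at this
        exact lt_irrefl _ this
    · rcases hy with rfl | hy
      · exfalso
        rw [hσ'i, hupd x hx] at hxy
        have := hmem_lt x hx
        rw [hxy] at this
        exact lt_irrefl _ this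
      · rw [hupd x hx, hupd y hy] at hxy
        exact hinj hx hy hxy
  have himg' : (insert i S).image σ' =
      Finset.univ.filter (fun q : Fin N => (q : ℕ) < (insert i S).card) := by
    rw [Finset.image_insert, himgS, himg, hcardS']
    ext q
    simp only [Finset.mem_insert, Finset.mem_filter, Finset.mem_univ, true_and]
    constructor
    · rintro (rfl | h)
      · rw [hσ'i]
        have : (p : ℕ) = S.card := rfl
        omega
      · exact Nat.lt_succ_of_lt h
    · intro h
      rcases Nat.lt_succ_iff_lt_or_eq.mp h with h | h
      · exact Or.inr h
      · left
        rw [hσ'i]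
        exact Fin.ext (by rw [h])
  have hle := hopt (insert i S) σ' (by omega) hinj' himg'
  rw [Finset.sum_insert hi] at hle
  have hsum : ∑ j ∈ S, θ (σ' j) * u j * (r j - lam)
      = ∑ j ∈ S, θ (σ j) * u j * (r j - lam) := by
    apply Finset.sum_congr rfl
    intro j hj; rw [hupd j hj]
  rw [hsum] at hle
  have h1 : θ (σ' i) * u i * (r i - lam) ≤ 0 := by linarith
  rw [hσ'i] at h1
  nlinarith [hθpos p, hu i]
end

section
/- Suppose θ_1 ≥ θ_2 ≥ ⋯ ≥ θ_N > 0 and fix λ ∈ ℝ. For an assortment S define g(S) = max over bijections σ : S → {1,…,|S|} of Σ_{i∈S} θ_{σ(i)} u_i (r_i − λ). If S with |S| = c maximizes g over all assortments of size at most c, then u_i (r_i − λ) ≥ u_j (r_j − λ) for every i ∈ S and every j ∉ S. -/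
/-- if `S` with `|S| = c` maximizes
`g(S) = max_{σ : S ↔ {1..|S|}} Σ_{i∈S} θ_{σ(i)} u_i (r_i − λ)` over all
assortments of size at most `c` (with `σ` a gap-free position assignment
witnessing the maximum), then `u_i (r_i − λ) ≥ u_j (r_j − λ)` for every
`i ∈ S` and every `j ∉ S`. -/
theorem maximizer_full_implies_dominant (N c : ℕ) (hc : c ≤ N)
    (u r θ : Fin N → ℝ)
    (hu : ∀ i, 0 < u i) (hθpos : ∀ i, 0 < θ i)
    (hθ : ∀ i j : Fin N, i ≤ j → θ j ≤ θ i) (lam : ℝ)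
    (S : Finset (Fin N)) (hS : S.card = c)
    (σ : Fin N → Fin N) (hinj : Set.InjOn σ ↑S)
    (himg : S.image σ = Finset.univ.filter (fun p : Fin N => (p : ℕ) < S.card))
    (hopt : ∀ (S' : Finset (Fin N)) (σ' : Fin N → Fin N),
      S'.card ≤ c → Set.InjOn σ' ↑S' →
      S'.image σ' = Finset.univ.filter (fun p : Fin N => (p : ℕ) < S'.card) →
      ∑ i ∈ S', θ (σ' i) * u i * (r i - lam) ≤
        ∑ i ∈ S, θ (σ i) * u i * (r i - lam)) :
    ∀ i ∈ S, ∀ j : Fin N, j ∉ S → u j * (r j - lam) ≤ u i * (r i - lam) := by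
  intro i hi j hj
  have hji : j ≠ i := fun h => hj (h ▸ hi)
  set S' : Finset (Fin N) := insert j (S.erase i) with hS'
  have hjE : j ∉ S.erase i := fun h => hj (Finset.mem_of_mem_erase h)
  have hcard : S'.card = S.card := by
    rw [hS', Finset.card_insert_of_notMem hjE, Finset.card_erase_of_mem hi]
    have : 1 ≤ S.card := Finset.card_pos.mpr ⟨i, hi⟩
    omega
  set σ' : Fin N → Fin N := fun k => if k = j then σ i else σ k with hσ'
  have hσ'E : ∀ k ∈ S.erase i, σ' k = σ k := by
    intro k hk
    have : k ≠ j := fun h => hj (h ▸ Finset.mem_of_mem_erase hk)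
    simp [hσ', this]
  have hinj' : Set.InjOn σ' ↑S' := by
    intro a ha b hb hab
    simp only [hS', Finset.coe_insert, Set.mem_insert_iff, Finset.mem_coe] at ha hb
    rcases ha with ha | ha <;> rcases hb with hb | hb
    · rw [ha, hb]
    · exfalso
      have := hσ'E b hb
      rw [ha, this] at hab
      simp only [hσ', if_pos rfl] at hab
      have : i = b := hinj hi (Finset.mem_of_mem_erase hb) hab
      exact (Finset.mem_erase.mp hb).1 this.symm
    · exfalso
      have := hσ'E a ha
      rw [hb, this] at hab
      simp only [hσ', if_pos rfl] at hab
      have : a = i := hinj (Finset.mem_of_mem_erase ha) hi hab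
      exact (Finset.mem_erase.mp ha).1 this
    · rw [hσ'E a ha, hσ'E b hb] at hab
      exact hinj (Finset.mem_of_mem_erase ha) (Finset.mem_of_mem_erase hb) hab
  have himg' : S'.image σ' = Finset.univ.filter (fun p : Fin N => (p : ℕ) < S'.card) := by
    have h1 : S'.image σ' = insert (σ i) ((S.erase i).image σ) := by
      rw [hS', Finset.image_insert]
      congr 1
      · simp [hσ']
      · exact Finset.image_congr (fun k hk => hσ'E k hk)
    have h2 : S.image σ = insert (σ i) ((S.erase i).image σ) := by
      conv_lhs => rw [← Finset.insert_erase hi, Finset.image_insert]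
    rw [h1, ← h2, hcard, himg]
  have hle := hopt S' σ' (by rw [hcard, hS]) hinj' himg'
  have hsum' : ∑ k ∈ S', θ (σ' k) * u k * (r k - lam)
      = θ (σ i) * u j * (r j - lam) + ∑ k ∈ S.erase i, θ (σ k) * u k * (r k - lam) := by
    rw [hS', Finset.sum_insert hjE]
    congr 1
    · simp [hσ']
    · exact Finset.sum_congr rfl (fun k hk => by rw [hσ'E k hk])
  have hsum : ∑ k ∈ S, θ (σ k) * u k * (r k - lam)
      = θ (σ i) * u i * (r i - lam) + ∑ k ∈ S.erase i, θ (σ k) * u k * (r k - lam) := by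
    rw [← Finset.insert_erase hi, Finset.sum_insert (Finset.notMem_erase i S)]
    rw [Finset.insert_erase hi]
  rw [hsum', hsum] at hle
  have hθi : (0:ℝ) < θ (σ i) := hθpos _
  have := add_le_add_right (le_of_add_le_add_right hle) 0
  have hmul : θ (σ i) * (u j * (r j - lam)) ≤ θ (σ i) * (u i * (r i - lam)) := by
    rw [← mul_assoc, ← mul_assoc]
    exact le_of_add_le_add_right hle
  exact le_of_mul_le_mul_left hmul hθi
end

section
/- Suppose θ_1 ≥ θ_2 ≥ ⋯ ≥ θ_N > 0 and fix λ ∈ ℝ. For an assortment S define g(S) = max over bijections σ : S → {1,…,|S|} of Σ_{i∈S} θ_{σ(i)} u_i (r_i − λ). If S with |S| ≤ c maximizes g over all assortments of size at most c, then S also maximizes Σ_{i∈S'} u_i (r_i − λ) over all assortments S' with |S'| ≤ c. (That is, every assortment in B(λ) belongs to A(λ): 𝓑 ⊆ 𝓐.) -/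
/-- `𝓑 ⊆ 𝓐`: if `S` with `|S| ≤ c` maximizes
`g(S) = max_{σ : S ↔ {1..|S|}} Σ_{i∈S} θ_{σ(i)} u_i (r_i − λ)` over all
assortments of size at most `c` (with `σ` a gap-free position assignment
witnessing the maximum), then `S` also maximizes `Σ_{i∈S'} u_i (r_i − λ)`
over all assortments `S'` with `|S'| ≤ c`. -/
theorem B_subset_A (N c : ℕ) (hc : c ≤ N)
    (u r θ : Fin N → ℝ)
    (hu : ∀ i, 0 < u i) (hθpos : ∀ i, 0 < θ i)
    (hθ : ∀ i j : Fin N, i ≤ j → θ j ≤ θ i) (lam : ℝ)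
    (S : Finset (Fin N)) (hS : S.card ≤ c)
    (σ : Fin N → Fin N) (hinj : Set.InjOn σ ↑S)
    (himg : S.image σ = Finset.univ.filter (fun p : Fin N => (p : ℕ) < S.card))
    (hopt : ∀ (S' : Finset (Fin N)) (σ' : Fin N → Fin N),
      S'.card ≤ c → Set.InjOn σ' ↑S' →
      S'.image σ' = Finset.univ.filter (fun p : Fin N => (p : ℕ) < S'.card) →
      ∑ i ∈ S', θ (σ' i) * u i * (r i - lam) ≤
        ∑ i ∈ S, θ (σ i) * u i * (r i - lam)) :
    ∀ S' : Finset (Fin N), S'.card ≤ c →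
      ∑ i ∈ S', u i * (r i - lam) ≤ ∑ i ∈ S, u i * (r i - lam) := by
  set x : Fin N → ℝ := fun i => u i * (r i - lam) with hxdef
  have hopt' : ∀ (S' : Finset (Fin N)) (σ' : Fin N → Fin N),
      S'.card ≤ c → Set.InjOn σ' ↑S' →
      S'.image σ' = Finset.univ.filter (fun p : Fin N => (p : ℕ) < S'.card) →
      ∑ i ∈ S', θ (σ' i) * x i ≤ ∑ i ∈ S, θ (σ i) * x i := by
    intro S' σ' h1 h2 h3
    simpa [hxdef, mul_assoc] using hopt S' σ' h1 h2 h3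
  have hNcard : S.card ≤ N := hS.trans hc
  have hlt : ∀ i ∈ S, (σ i : ℕ) < S.card := by
    intro i hi
    have h : σ i ∈ S.image σ := Finset.mem_image_of_mem σ hi
    rw [himg] at h
    exact (Finset.mem_filter.mp h).2
  have hsurj : ∀ p : Fin N, (p : ℕ) < S.card → ∃ i ∈ S, σ i = p := by
    intro p hp
    have h : p ∈ S.image σ := by
      rw [himg]; exact Finset.mem_filter.mpr ⟨Finset.mem_univ _, hp⟩
    simpa [Finset.mem_image] using h
  -- Lemma A : all items in S have nonnegative value
  have hA : ∀ i ∈ S, 0 ≤ x i := by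
    intro i hi
    have hm1 : 1 ≤ S.card := Finset.card_pos.mpr ⟨i, hi⟩
    obtain ⟨j, hj, hσj⟩ := hsurj ⟨S.card - 1, by omega⟩ (by show S.card - 1 < S.card; omega)
    have hσjv : (σ j : ℕ) = S.card - 1 := by rw [hσj]
    -- step 1: 0 ≤ x j
    have hstep1 : 0 ≤ x j := by
      have hcard' : (S.erase j).card = S.card - 1 := Finset.card_erase_of_mem hj
      have h3 : (S.erase j).image σ =
          Finset.univ.filter (fun p : Fin N => (p : ℕ) < (S.erase j).card) := by
        ext p
        simp only [Finset.mem_image, Finset.mem_erase, Finset.mem_filter,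
          Finset.mem_univ, true_and, hcard']
        constructor
        · rintro ⟨a, ⟨haj, haS⟩, rfl⟩
          have h1 := hlt a haS
          have h2 : (σ a : ℕ) ≠ S.card - 1 := by
            intro h
            exact haj (hinj haS hj (Fin.ext (by rw [h, hσjv])))
          omega
        · intro hp
          obtain ⟨a, haS, rfl⟩ := hsurj p (by omega)
          refine ⟨a, ⟨?_, haS⟩, rfl⟩
          intro h
          subst h
          omega
      have hkey := hopt' (S.erase j) σ (by rw [hcard']; omega)
        (hinj.mono (Finset.coe_subset.mpr (Finset.erase_subset j S))) h3
      have hsplit : ∑ i ∈ S, θ (σ i) * x i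
          = θ (σ j) * x j + ∑ i ∈ S.erase j, θ (σ i) * x i :=
        (Finset.add_sum_erase S _ hj).symm
      have : 0 ≤ θ (σ j) * x j := by linarith [hkey, hsplit.le, hsplit.ge]
      nlinarith [hθpos (σ j)]
    by_cases hij : i = j
    · rw [hij]; exact hstep1
    -- step 2: general i, swap i out via j
    have hσiv : (σ i : ℕ) < S.card := hlt i hi
    have hσij : (σ i : ℕ) ≠ S.card - 1 := by
      intro h
      exact hij (hinj hi hj (Fin.ext (by rw [h, hσjv])))
    have hjei : j ∈ S.erase i := Finset.mem_erase.mpr ⟨fun h => hij h.symm, hj⟩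
    set σ' : Fin N → Fin N := Function.update σ j (σ i) with hσ'def
    have hσ'j : σ' j = σ i := Function.update_self j (σ i) σ
    have hσ'ne : ∀ a, a ≠ j → σ' a = σ a := fun a ha => Function.update_of_ne ha _ _
    have hcard' : (S.erase i).card = S.card - 1 := Finset.card_erase_of_mem hi
    have h2 : Set.InjOn σ' ↑(S.erase i) := by
      intro a ha b hb hab
      simp only [Finset.coe_erase, Set.mem_diff, Finset.mem_coe] at ha hb
      by_cases haj : a = j <;> by_cases hbj : b = j
      · rw [haj, hbj]
      · rw [haj, hσ'j, hσ'ne b hbj] at hab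
        exact absurd (hinj hi hb.1 hab).symm (by simpa using hb.2)
      · rw [hbj, hσ'j, hσ'ne a haj] at hab
        exact absurd (hinj ha.1 hi hab) (by simpa using ha.2)
      · rw [hσ'ne a haj, hσ'ne b hbj] at hab
        exact hinj ha.1 hb.1 hab
    have h3 : (S.erase i).image σ' =
        Finset.univ.filter (fun p : Fin N => (p : ℕ) < (S.erase i).card) := by
      ext p
      simp only [Finset.mem_image, Finset.mem_erase, Finset.mem_filter,
        Finset.mem_univ, true_and, hcard']
      constructor
      · rintro ⟨a, ⟨hai, haS⟩, rfl⟩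
        by_cases haj : a = j
        · rw [haj, hσ'j]; omega
        · rw [hσ'ne a haj]
          have h1 := hlt a haS
          have h2' : (σ a : ℕ) ≠ S.card - 1 := by
            intro h
            exact haj (hinj haS hj (Fin.ext (by rw [h, hσjv])))
          omega
      · intro hp
        obtain ⟨a, haS, rfl⟩ := hsurj p (by omega)
        by_cases hai : a = i
        · subst hai
          exact ⟨j, ⟨fun h => hij h.symm, hj⟩, hσ'j⟩
        · refine ⟨a, ⟨hai, haS⟩, ?_⟩
          apply hσ'ne
          intro h
          subst h
          omega
    have hkey := hopt' (S.erase i) σ' (by rw [hcard']; omega) h2 h3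
    have hLHS : ∑ a ∈ S.erase i, θ (σ' a) * x a
        = θ (σ i) * x j + ∑ a ∈ (S.erase i).erase j, θ (σ a) * x a := by
      rw [← Finset.add_sum_erase _ _ hjei, hσ'j]
      congr 1
      refine Finset.sum_congr rfl (fun a ha => ?_)
      rw [hσ'ne a (Finset.mem_erase.mp ha).1]
    have hRHS : ∑ a ∈ S, θ (σ a) * x a
        = θ (σ i) * x i + (θ (σ j) * x j + ∑ a ∈ (S.erase i).erase j, θ (σ a) * x a) := by
      rw [← Finset.add_sum_erase S _ hi, ← Finset.add_sum_erase (S.erase i) _ hjei]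
    have hθij : θ (σ j) ≤ θ (σ i) := by
      apply hθ
      rw [Fin.le_def, hσjv]
      omega
    rw [hLHS, hRHS] at hkey
    nlinarith [hθpos (σ i), hθpos (σ j)]
  -- Lemma C : exchange
  have hC : ∀ k, k ∉ S → ∀ i ∈ S, x k ≤ x i := by
    intro k hk i hi
    have hkei : k ∉ S.erase i := fun h => hk (Finset.mem_of_mem_erase h)
    set σ' : Fin N → Fin N := Function.update σ k (σ i) with hσ'def
    have hσ'k : σ' k = σ i := Function.update_self k (σ i) σ
    have hσ'ne : ∀ a, a ≠ k → σ' a = σ a := fun a ha => Function.update_of_ne ha _ _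
    set T : Finset (Fin N) := insert k (S.erase i) with hTdef
    have hcardT : T.card = S.card := by
      rw [hTdef, Finset.card_insert_of_notMem hkei, Finset.card_erase_of_mem hi]
      have : 1 ≤ S.card := Finset.card_pos.mpr ⟨i, hi⟩
      omega
    have h2 : Set.InjOn σ' ↑T := by
      intro a ha b hb hab
      simp only [hTdef, Finset.coe_insert, Set.mem_insert_iff, Finset.coe_erase,
        Set.mem_diff, Finset.mem_coe, Set.mem_singleton_iff] at ha hb
      rcases ha with rfl | ha <;> rcases hb with rfl | hb
      · rfl
      · rw [hσ'k, hσ'ne b (fun h => hk (h ▸ hb.1))] at hab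
        exact absurd (hinj hi hb.1 hab).symm (by simpa using hb.2)
      · rw [hσ'k, hσ'ne a (fun h => hk (h ▸ ha.1))] at hab
        exact absurd (hinj ha.1 hi hab) (by simpa using ha.2)
      · rw [hσ'ne a (fun h => hk (h ▸ ha.1)), hσ'ne b (fun h => hk (h ▸ hb.1))] at hab
        exact hinj ha.1 hb.1 hab
    have h3 : T.image σ' = Finset.univ.filter (fun p : Fin N => (p : ℕ) < T.card) := by
      rw [hcardT]
      ext p
      simp only [hTdef, Finset.mem_image, Finset.mem_insert, Finset.mem_erase,
        Finset.mem_filter, Finset.mem_univ, true_and]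
      constructor
      · rintro ⟨a, ha, rfl⟩
        rcases ha with rfl | ⟨hai, haS⟩
        · rw [hσ'k]; exact hlt i hi
        · rw [hσ'ne a (fun h => hk (h ▸ haS))]; exact hlt a haS
      · intro hp
        obtain ⟨a, haS, rfl⟩ := hsurj p hp
        by_cases hai : a = i
        · subst hai
          exact ⟨k, Or.inl rfl, hσ'k⟩
        · exact ⟨a, Or.inr ⟨hai, haS⟩, hσ'ne a (fun h => hk (h ▸ haS))⟩
    have hkey := hopt' T σ' (by rw [hcardT]; exact hS) h2 h3
    have hLHS : ∑ a ∈ T, θ (σ' a) * x a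
        = θ (σ i) * x k + ∑ a ∈ S.erase i, θ (σ a) * x a := by
      rw [hTdef, Finset.sum_insert hkei, hσ'k]
      congr 1
      refine Finset.sum_congr rfl (fun a ha => ?_)
      rw [hσ'ne a (fun h => hk (h ▸ Finset.mem_of_mem_erase ha))]
    have hRHS : ∑ a ∈ S, θ (σ a) * x a
        = θ (σ i) * x i + ∑ a ∈ S.erase i, θ (σ a) * x a :=
      (Finset.add_sum_erase S _ hi).symm
    rw [hLHS, hRHS] at hkey
    have := hθpos (σ i)
    nlinarith
  -- Lemma B : if S.card < c, all items outside S are nonpositive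
  have hB : S.card < c → ∀ k, k ∉ S → x k ≤ 0 := by
    intro hcc k hk
    set p0 : Fin N := ⟨S.card, by omega⟩ with hp0def
    set σ' : Fin N → Fin N := Function.update σ k p0 with hσ'def
    have hσ'k : σ' k = p0 := Function.update_self k p0 σ
    have hσ'ne : ∀ a, a ≠ k → σ' a = σ a := fun a ha => Function.update_of_ne ha _ _
    set T : Finset (Fin N) := insert k S with hTdef
    have hcardT : T.card = S.card + 1 := Finset.card_insert_of_notMem hk
    have h2 : Set.InjOn σ' ↑T := by
      intro a ha b hb hab
      simp only [hTdef, Finset.coe_insert, Set.mem_insert_iff, Finset.mem_coe] at ha hb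
      rcases ha with rfl | ha <;> rcases hb with rfl | hb
      · rfl
      · exfalso
        rw [hσ'k, hσ'ne b (fun h => hk (h ▸ hb))] at hab
        have h4 := hlt b hb
        have h5 : (p0 : ℕ) = (σ b : ℕ) := congrArg Fin.val hab
        rw [hp0def] at h5
        simp only [Fin.val_mk] at h5
        omega
      · exfalso
        rw [hσ'k, hσ'ne a (fun h => hk (h ▸ ha))] at hab
        have h4 := hlt a ha
        have h5 : (σ a : ℕ) = (p0 : ℕ) := congrArg Fin.val hab
        rw [hp0def] at h5
        simp only [Fin.val_mk] at h5
        omega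
      · rw [hσ'ne a (fun h => hk (h ▸ ha)), hσ'ne b (fun h => hk (h ▸ hb))] at hab
        exact hinj ha hb hab
    have h3 : T.image σ' = Finset.univ.filter (fun p : Fin N => (p : ℕ) < T.card) := by
      rw [hcardT]
      ext p
      simp only [hTdef, Finset.mem_image, Finset.mem_insert, Finset.mem_filter,
        Finset.mem_univ, true_and]
      constructor
      · rintro ⟨a, ha, rfl⟩
        rcases ha with rfl | ha
        · rw [hσ'k]; simp [hp0def]
        · rw [hσ'ne a (fun h => hk (h ▸ ha))]
          have := hlt a ha
          omega
      · intro hp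
        by_cases hpm : (p : ℕ) < S.card
        · obtain ⟨a, haS, rfl⟩ := hsurj p hpm
          exact ⟨a, Or.inr haS, hσ'ne a (fun h => hk (h ▸ haS))⟩
        · refine ⟨k, Or.inl rfl, ?_⟩
          rw [hσ'k]
          apply Fin.ext
          simp [hp0def]
          omega
    have hkey := hopt' T σ' (by omega) h2 h3
    have hLHS : ∑ a ∈ T, θ (σ' a) * x a
        = θ p0 * x k + ∑ a ∈ S, θ (σ a) * x a := by
      rw [hTdef, Finset.sum_insert hk, hσ'k]
      congr 1
      refine Finset.sum_congr rfl (fun a ha => ?_)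
      rw [hσ'ne a (fun h => hk (h ▸ ha))]
    rw [hLHS] at hkey
    have := hθpos p0
    nlinarith
  -- Final combination
  intro S' hS'
  have hsplit' : ∑ i ∈ S', x i = ∑ i ∈ S' ∩ S, x i + ∑ i ∈ S' \ S, x i :=
    (Finset.sum_inter_add_sum_sdiff S' S x).symm
  have hsplitS : ∑ i ∈ S, x i = ∑ i ∈ S ∩ S', x i + ∑ i ∈ S \ S', x i :=
    (Finset.sum_inter_add_sum_sdiff S S' x).symm
  have hintercomm : ∑ i ∈ S' ∩ S, x i = ∑ i ∈ S ∩ S', x i := by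
    rw [Finset.inter_comm]
  by_cases hle : S'.card ≤ S.card
  · -- injection-style argument via minimal element
    have hcards : (S' \ S).card ≤ (S \ S').card := by
      have h1 := Finset.card_inter_add_card_sdiff S' S
      have h2 := Finset.card_inter_add_card_sdiff S S'
      have h3 : (S' ∩ S).card = (S ∩ S').card := by rw [Finset.inter_comm]
      omega
    have hdiff : ∑ i ∈ S' \ S, x i ≤ ∑ i ∈ S \ S', x i := by
      rcases Finset.eq_empty_or_nonempty (S' \ S) with he | hne
      · rw [he, Finset.sum_empty]
        exact Finset.sum_nonneg (fun i hi => hA i (Finset.mem_sdiff.mp hi).1)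
      · have hbne : (S \ S').Nonempty := by
          rw [← Finset.card_pos]
          have := Finset.card_pos.mpr hne
          omega
        obtain ⟨i0, hi0, hmin⟩ := Finset.exists_min_image (S \ S') x hbne
        have hi0S : i0 ∈ S := (Finset.mem_sdiff.mp hi0).1
        have h1 : ∑ i ∈ S' \ S, x i ≤ (S' \ S).card • x i0 := by
          rw [← Finset.sum_const]
          exact Finset.sum_le_sum (fun k hk =>
            hC k (Finset.mem_sdiff.mp hk).2 i0 hi0S)
        have h2 : (S \ S').card • x i0 ≤ ∑ i ∈ S \ S', x i := by
          rw [← Finset.sum_const]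
          exact Finset.sum_le_sum (fun i hi => hmin i hi)
        have h3 : ((S' \ S).card : ℝ) * x i0 ≤ ((S \ S').card : ℝ) * x i0 := by
          apply mul_le_mul_of_nonneg_right _ (hA i0 hi0S)
          exact_mod_cast hcards
        rw [nsmul_eq_mul] at h1 h2
        linarith
    rw [hsplit', hsplitS, hintercomm]
    linarith
  · have hcc : S.card < c := by omega
    have hnonpos : ∑ i ∈ S' \ S, x i ≤ 0 :=
      Finset.sum_nonpos (fun i hi => hB hcc i (Finset.mem_sdiff.mp hi).2)
    have hsub : ∑ i ∈ S' ∩ S, x i ≤ ∑ i ∈ S, x i :=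
      Finset.sum_le_sum_of_subset_of_nonneg (Finset.inter_subset_right)
        (fun i hi _ => hA i hi)
    rw [hsplit']
    linarith
end

section
/- Let Z* be the optimal value of the CMLAPP. Then any pair (S,σ), with S an assortment of size at most c and σ : S → {1,…,N} injective, that maximizes Σ_{i∈S} θ_{σ(i)} u_i (r_i − Z*) over all such pairs satisfies U(S,σ) = Z*, i.e., it is an optimal solution of the CMLAPP. -/
lemma denom_pos {N : ℕ} (u θ : Fin N → ℝ) (hu : ∀ i, 0 < u i) (hθ0 : ∀ i, 0 ≤ θ i)
    (S : Finset (Fin N)) (σ : Fin N → Fin N) :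
    0 < ∑ j ∈ S, θ (σ j) * u j + 1 := by
  have : 0 ≤ ∑ j ∈ S, θ (σ j) * u j :=
    Finset.sum_nonneg fun j _ => mul_nonneg (hθ0 _) (hu j).le
  linarith

/-- if `Z*` is the optimal CMLAPP value, then any feasible pair
`(S,σ)` maximizing `Σ_{i∈S} θ_{σ(i)} u_i (r_i − Z*)` over all feasible pairs
satisfies `U(S,σ) = Z*`, i.e. it is an optimal CMLAPP solution. -/
theorem maximizer_at_Zstar_is_optimal (N c : ℕ) (hc : c ≤ N)
    (u r θ : Fin N → ℝ)
    (hu : ∀ i, 0 < u i) (hθ0 : ∀ i, 0 ≤ θ i)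
    (hθ : ∀ i j : Fin N, i ≤ j → θ j ≤ θ i)
    (Z : ℝ)
    (hZ : IsGreatest {z : ℝ | ∃ (S : Finset (Fin N)) (σ : Fin N → Fin N),
      S.card ≤ c ∧ Set.InjOn σ ↑S ∧ z = expProfit u r θ S σ} Z)
    (S : Finset (Fin N)) (σ : Fin N → Fin N)
    (hS : S.card ≤ c) (hσ : Set.InjOn σ ↑S)
    (hmax : ∀ (S' : Finset (Fin N)) (σ' : Fin N → Fin N),
      S'.card ≤ c → Set.InjOn σ' ↑S' →
      ∑ i ∈ S', θ (σ' i) * u i * (r i - Z) ≤ ∑ i ∈ S, θ (σ i) * u i * (r i - Z)) :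
    expProfit u r θ S σ = Z := by
  obtain ⟨⟨S₀, σ₀, hS₀, hσ₀, hZ₀⟩, hub⟩ := hZ
  have key : ∀ (T : Finset (Fin N)) (τ : Fin N → Fin N),
      ∑ i ∈ T, θ (τ i) * u i * (r i - Z)
        = (∑ i ∈ T, r i * (θ (τ i) * u i)) - Z * ∑ j ∈ T, θ (τ j) * u j := by
    intro T τ
    rw [Finset.mul_sum, ← Finset.sum_sub_distrib]
    exact Finset.sum_congr rfl fun i _ => by ring
  have hD₀pos := denom_pos u θ hu hθ0 S₀ σ₀
  have hDpos := denom_pos u θ hu hθ0 S σ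
  have e0 : expProfit u r θ S₀ σ₀ = Z := hZ₀.symm
  rw [expProfit_eq, div_eq_iff hD₀pos.ne'] at e0
  have h1 : ∑ i ∈ S₀, θ (σ₀ i) * u i * (r i - Z) = Z := by
    rw [key, e0]; ring
  have h2 : expProfit u r θ S σ ≤ Z := hub ⟨S, σ, hS, hσ, rfl⟩
  rw [expProfit_eq, div_le_iff₀ hDpos] at h2
  have h3 : ∑ i ∈ S, θ (σ i) * u i * (r i - Z) ≤ Z := by
    rw [key]; nlinarith [h2]
  have h4 := hmax S₀ σ₀ hS₀ hσ₀
  rw [h1] at h4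
  have h5 : ∑ i ∈ S, θ (σ i) * u i * (r i - Z) = Z := le_antisymm h3 h4
  rw [key] at h5
  rw [expProfit_eq, div_eq_iff hDpos.ne']
  nlinarith [h5]
end

section
/- Suppose θ_1 ≥ θ_2 ≥ ⋯ ≥ θ_N > 0. Then there exists λ ∈ ℝ and an optimal solution (S,σ) of the CMLAPP such that S maximizes Σ_{i∈S'} u_i (r_i − λ) over all assortments S' with |S'| ≤ c; in other words, the CMLAPP admits an optimal assortment lying in the candidate family 𝓐 = {A(λ) : λ ∈ ℝ} of the capacitated multinomial logit assortment problem without position bias. -/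
section AuxCMLAPP
open Finset

lemma aux_strictMono_le {m N : ℕ} (f : Fin m → Fin N) (hf : StrictMono f) (j : Fin m) :
    (j : ℕ) ≤ (f j : ℕ) := by
  have key : ∀ n, ∀ hn : n < m, n ≤ (f ⟨n, hn⟩ : ℕ) := by
    intro n
    induction n with
    | zero => intro hn; exact Nat.zero_le _
    | succ n ih =>
      intro hn
      have h1 : (f ⟨n, Nat.lt_of_succ_lt hn⟩ : ℕ) < (f ⟨n+1, hn⟩ : ℕ) :=
        hf (Fin.mk_lt_mk.mpr (Nat.lt_succ_self n))
      have h2 := ih (Nat.lt_of_succ_lt hn)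
      omega
  simpa using key j.val j.2

/-- sum of an antitone nonneg function over any set of card ≤ m is at most the
sum over the first m indices -/
lemma aux_top {N : ℕ} (w : Fin N → ℝ) (hw0 : ∀ k, 0 ≤ w k)
    (hwa : ∀ k l : Fin N, k ≤ l → w l ≤ w k)
    (K : Finset (Fin N)) (m : ℕ) (hK : K.card ≤ m) :
    ∑ k ∈ K, w k ≤ ∑ k ∈ univ.filter (fun k : Fin N => (k : ℕ) < m), w k := by
  classical
  have hginj : Function.Injective (fun j => K.orderEmbOfFin rfl j) :=
    (K.orderEmbOfFin rfl).injective
  have hgsm : StrictMono (fun j => K.orderEmbOfFin rfl j) :=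
    (K.orderEmbOfFin rfl).strictMono
  have himg : Finset.image (fun j => K.orderEmbOfFin rfl j) Finset.univ = K := by
    apply Finset.eq_of_subset_of_card_le
    · intro x hx
      simp only [Finset.mem_image] at hx
      obtain ⟨j, _, rfl⟩ := hx
      exact K.orderEmbOfFin_mem rfl j
    · rw [Finset.card_image_of_injective _ hginj, card_univ, Fintype.card_fin]
  have hsum : ∑ k ∈ K, w k = ∑ j : Fin K.card, w (K.orderEmbOfFin rfl j) := by
    conv_lhs => rw [← himg]
    exact Finset.sum_image (fun a _ b _ h => hginj h)
  rw [hsum]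
  have hjN : ∀ j : Fin K.card, (j : ℕ) < N := fun j =>
    lt_of_le_of_lt (aux_strictMono_le _ hgsm j) (K.orderEmbOfFin rfl j).2
  calc ∑ j : Fin K.card, w (K.orderEmbOfFin rfl j)
      ≤ ∑ j : Fin K.card, w ⟨(j : ℕ), hjN j⟩ :=
        Finset.sum_le_sum (fun j _ =>
          hwa _ _ (Fin.mk_le_mk.mpr (aux_strictMono_le _ hgsm j)))
    _ = ∑ k ∈ univ.filter (fun k : Fin N => (k : ℕ) < K.card), w k := by
        have himg2 : Finset.image (fun j : Fin K.card => (⟨(j : ℕ), hjN j⟩ : Fin N)) Finset.univ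
            = univ.filter (fun k : Fin N => (k : ℕ) < K.card) := by
          ext k
          simp only [Finset.mem_image, Finset.mem_filter, Finset.mem_univ, true_and]
          constructor
          · rintro ⟨j, _, rfl⟩; exact j.2
          · intro hk; exact ⟨⟨(k : ℕ), hk⟩, by apply Fin.ext; rfl⟩
        rw [← himg2, Finset.sum_image]
        intro a _ b _ h
        apply Fin.ext
        simpa [Fin.ext_iff] using h
    _ ≤ ∑ k ∈ univ.filter (fun k : Fin N => (k : ℕ) < m), w k := by
        apply Finset.sum_le_sum_of_subset_of_nonneg ?_ (fun k _ _ => hw0 k)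
        intro k hk
        simp only [Finset.mem_filter, Finset.mem_univ, true_and] at hk ⊢
        omega

/-- successive differences of the (extended) position visibilities -/
noncomputable def dd {N : ℕ} (θ : Fin N → ℝ) (k : ℕ) : ℝ :=
  (if h : k < N then θ ⟨k, h⟩ else 0) - (if h : k+1 < N then θ ⟨k+1, h⟩ else 0)

lemma aux_dd_nonneg {N : ℕ} (θ : Fin N → ℝ) (hθpos : ∀ i, 0 < θ i)
    (hθ : ∀ i j : Fin N, i ≤ j → θ j ≤ θ i) (k : ℕ) : 0 ≤ dd θ k := by
  unfold dd
  by_cases h1 : k + 1 < N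
  · have hk : k < N := Nat.lt_of_succ_lt h1
    rw [dif_pos hk, dif_pos h1, sub_nonneg]
    exact hθ _ _ (Fin.mk_le_mk.mpr (Nat.le_succ k))
  · rw [dif_neg h1, sub_zero]
    by_cases h2 : k < N
    · rw [dif_pos h2]; exact le_of_lt (hθpos _)
    · rw [dif_neg h2]

lemma aux_theta {N : ℕ} (θ : Fin N → ℝ) (p : Fin N) :
    θ p = ∑ k ∈ Finset.range N, if (p : ℕ) ≤ k then dd θ k else 0 := by
  set Θ : ℕ → ℝ := fun n => if h : n < N then θ ⟨n, h⟩ else 0 with hΘ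
  have h1 : ∑ k ∈ Finset.range N, (if (p : ℕ) ≤ k then dd θ k else 0)
      = ∑ k ∈ Finset.Ico (p : ℕ) N, (Θ k - Θ (k+1)) := by
    rw [← Finset.sum_filter]
    congr 1
    ext k
    simp only [Finset.mem_filter, Finset.mem_range, Finset.mem_Ico]
    omega
  rw [h1, Finset.sum_Ico_eq_sub _ (le_of_lt p.2), Finset.sum_range_sub' Θ,
    Finset.sum_range_sub' Θ]
  have h2 : Θ N = 0 := by simp [hΘ]
  have h3 : Θ (p : ℕ) = θ p := by simp [hΘ, p.2]
  rw [h2, h3]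
  ring

/-- Abel-type expansion of a position-weighted sum -/
lemma aux_expand {N : ℕ} (θ : Fin N → ℝ) (A : Finset (Fin N)) (pos : Fin N → Fin N)
    (F : Fin N → ℝ) :
    ∑ i ∈ A, θ (pos i) * F i
      = ∑ k ∈ Finset.range N,
          dd θ k * ∑ i ∈ A.filter (fun i => ((pos i : ℕ)) ≤ k), F i := by
  classical
  calc ∑ i ∈ A, θ (pos i) * F i
      = ∑ i ∈ A, ∑ k ∈ Finset.range N,
          (if ((pos i : ℕ)) ≤ k then dd θ k * F i else 0) := by
        refine Finset.sum_congr rfl fun i _ => ?_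
        rw [aux_theta θ (pos i), Finset.sum_mul]
        refine Finset.sum_congr rfl fun k _ => ?_
        rw [ite_mul, zero_mul]
    _ = ∑ k ∈ Finset.range N, ∑ i ∈ A,
          (if ((pos i : ℕ)) ≤ k then dd θ k * F i else 0) := Finset.sum_comm
    _ = ∑ k ∈ Finset.range N,
          dd θ k * ∑ i ∈ A.filter (fun i => ((pos i : ℕ)) ≤ k), F i := by
        refine Finset.sum_congr rfl fun k _ => ?_
        rw [Finset.mul_sum, Finset.sum_filter]

/-- the main rearrangement-type inequality: any feasible position-weighted sum is
dominated by the greedy one -/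
lemma aux_main {N : ℕ} (c : ℕ) (θ v : Fin N → ℝ) (hθpos : ∀ i, 0 < θ i)
    (hθ : ∀ i j : Fin N, i ≤ j → θ j ≤ θ i) (e : Equiv.Perm (Fin N))
    (hve : ∀ k l : Fin N, k ≤ l → v (e l) ≤ v (e k))
    (S' : Finset (Fin N)) (σ' : Fin N → Fin N) (hcard : S'.card ≤ c)
    (hinj : Set.InjOn σ' ↑S') :
    ∑ i ∈ S', θ (σ' i) * v i
      ≤ ∑ k ∈ univ.filter (fun k : Fin N => (k : ℕ) < c), θ k * max (v (e k)) 0 := by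
  classical
  set w : Fin N → ℝ := fun k => max (v (e k)) 0 with hw
  have hw0 : ∀ k, 0 ≤ w k := fun k => le_max_right _ _
  have hwa : ∀ k l : Fin N, k ≤ l → w l ≤ w k := fun k l hkl =>
    max_le_max (hve k l hkl) le_rfl
  -- step 1: replace v by its positive part
  have step1 : ∑ i ∈ S', θ (σ' i) * v i ≤ ∑ i ∈ S', θ (σ' i) * w (e.symm i) := by
    refine Finset.sum_le_sum fun i _ => ?_
    apply mul_le_mul_of_nonneg_left _ (le_of_lt (hθpos _))
    have : v i = v (e (e.symm i)) := by rw [Equiv.apply_symm_apply]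
    rw [this]
    exact le_max_left _ _
  refine step1.trans ?_
  rw [aux_expand θ S' σ' (fun i => w (e.symm i)),
    show (∑ k ∈ univ.filter (fun k : Fin N => (k : ℕ) < c), θ k * w k)
      = ∑ i ∈ (univ.filter (fun k : Fin N => (k : ℕ) < c)), θ (id i) * w i from rfl,
    aux_expand θ _ id w]
  refine Finset.sum_le_sum fun k _ => ?_
  refine mul_le_mul_of_nonneg_left ?_ (aux_dd_nonneg θ hθpos hθ k)
  -- inner sums
  set T : Finset (Fin N) := S'.filter (fun i => ((σ' i : ℕ)) ≤ k) with hT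
  have hTsub : T ⊆ S' := Finset.filter_subset _ _
  have hTinj : Set.InjOn σ' ↑T := hinj.mono (by exact_mod_cast hTsub)
  have hcard1 : T.card ≤ c := le_trans (Finset.card_le_card hTsub) hcard
  have hcard2 : T.card ≤ k + 1 := by
    have h1 : T.card = (T.image σ').card :=
      (Finset.card_image_of_injOn hTinj).symm
    have h2 : T.image σ' ⊆ univ.filter (fun p : Fin N => (p : ℕ) ≤ k) := by
      intro p hp
      simp only [Finset.mem_image] at hp
      obtain ⟨i, hi, rfl⟩ := hp
      simp only [hT, Finset.mem_filter] at hi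
      simp only [Finset.mem_filter, Finset.mem_univ, true_and]
      exact hi.2
    have h3 : (univ.filter (fun p : Fin N => (p : ℕ) ≤ k)).card ≤ (Finset.range (k+1)).card :=
      Finset.card_le_card_of_injOn (fun p : Fin N => (p : ℕ))
        (fun p hp => by
          simp only [Finset.mem_coe, Finset.mem_filter, Finset.mem_univ, true_and] at hp
          simp only [Finset.mem_coe, Finset.mem_range]
          omega)
        (fun a _ b _ h => Fin.ext h)
    rw [Finset.card_range] at h3
    exact le_trans (h1.le.trans (Finset.card_le_card h2)) h3
  have hsum : ∑ i ∈ T, w (e.symm i) = ∑ j ∈ T.image (fun i => e.symm i), w j := by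
    rw [Finset.sum_image (fun a _ b _ h => e.symm.injective h)]
  have hcard3 : (T.image (fun i => e.symm i)).card ≤ min (k+1) c := by
    rw [Finset.card_image_of_injective _ e.symm.injective]
    omega
  calc ∑ i ∈ T, w (e.symm i)
      = ∑ j ∈ T.image (fun i => e.symm i), w j := hsum
    _ ≤ ∑ j ∈ univ.filter (fun j : Fin N => (j : ℕ) < min (k+1) c), w j :=
        aux_top w hw0 hwa _ _ hcard3
    _ = ∑ j ∈ (univ.filter (fun j : Fin N => (j : ℕ) < c)).filter
          (fun j => ((id j : Fin N) : ℕ) ≤ k), w j := by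
        congr 1
        ext j
        simp only [Finset.mem_filter, Finset.mem_univ, true_and, id_eq]
        omega

/-- the key algebraic equivalence: `lam ≤ U(S,σ)` iff `lam ≤ g(S,σ)` -/
lemma aux_equiv {N : ℕ} (u r θ : Fin N → ℝ) (hu : ∀ i, 0 < u i) (hθpos : ∀ i, 0 < θ i)
    (S : Finset (Fin N)) (σ : Fin N → Fin N) (lam : ℝ) :
    (lam ≤ expProfit u r θ S σ ↔ lam ≤ ∑ i ∈ S, θ (σ i) * (u i * (r i - lam))) := by
  set X : ℝ := ∑ j ∈ S, θ (σ j) * u j with hX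
  have hX0 : 0 ≤ X :=
    Finset.sum_nonneg fun j _ => mul_nonneg (le_of_lt (hθpos _)) (le_of_lt (hu _))
  have hD : (0:ℝ) < X + 1 := by linarith
  have hU : expProfit u r θ S σ = (∑ i ∈ S, r i * (θ (σ i) * u i)) / (X + 1) := by
    unfold expProfit
    rw [Finset.sum_div]
    refine Finset.sum_congr rfl fun i _ => ?_
    rw [← hX]
    ring
  have hg : ∑ i ∈ S, θ (σ i) * (u i * (r i - lam))
      = (∑ i ∈ S, r i * (θ (σ i) * u i)) - lam * X := by
    rw [hX, Finset.mul_sum, ← Finset.sum_sub_distrib]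
    exact Finset.sum_congr rfl fun i _ => by ring
  rw [hU, hg, le_div_iff₀ hD]
  constructor <;> intro h <;> nlinarith


end AuxCMLAPP

open Finset in
/-- the CMLAPP admits an optimal solution whose assortment lies in
the candidate family `𝓐 = {A(λ) : λ ∈ ℝ}` of the capacitated MNL assortment
problem without position bias: there exist `λ ∈ ℝ` and an optimal CMLAPP pair
`(S,σ)` such that `S` maximizes `Σ_{i∈S'} u_i (r_i − λ)` over all assortments
`S'` with `|S'| ≤ c`. -/
theorem optimal_assortment_in_A (N c : ℕ) (hc : c ≤ N)
    (u r θ : Fin N → ℝ)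
    (hu : ∀ i, 0 < u i) (hθpos : ∀ i, 0 < θ i)
    (hθ : ∀ i j : Fin N, i ≤ j → θ j ≤ θ i) :
    ∃ (lam : ℝ) (S : Finset (Fin N)) (σ : Fin N → Fin N),
      S.card ≤ c ∧ Set.InjOn σ ↑S ∧
      (∀ (S' : Finset (Fin N)) (σ' : Fin N → Fin N),
        S'.card ≤ c → Set.InjOn σ' ↑S' →
        expProfit u r θ S' σ' ≤ expProfit u r θ S σ) ∧
      (∀ S' : Finset (Fin N), S'.card ≤ c →
        ∑ i ∈ S', u i * (r i - lam) ≤ ∑ i ∈ S, u i * (r i - lam)) := by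
  classical
  -- an optimal pair exists
  obtain ⟨p₀, hp₀mem, hp₀max⟩ := Finset.exists_max_image
    (Finset.univ.filter fun p : Finset (Fin N) × (Fin N → Fin N) =>
      p.1.card ≤ c ∧ Set.InjOn p.2 ↑p.1)
    (fun p => expProfit u r θ p.1 p.2)
    ⟨(∅, id), by simp⟩
  simp only [Finset.mem_filter, Finset.mem_univ, true_and] at hp₀mem
  set lam : ℝ := expProfit u r θ p₀.1 p₀.2 with hlam
  have hle : ∀ (S' : Finset (Fin N)) (σ' : Fin N → Fin N),
      S'.card ≤ c → Set.InjOn σ' ↑S' → expProfit u r θ S' σ' ≤ lam := by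
    intro S' σ' h1 h2
    exact hp₀max (S', σ') (Finset.mem_filter.mpr ⟨Finset.mem_univ _, h1, h2⟩)
  set v : Fin N → ℝ := fun i => u i * (r i - lam) with hv
  set e : Equiv.Perm (Fin N) := Tuple.sort (fun i => -v i) with he
  have hve : ∀ k l : Fin N, k ≤ l → v (e l) ≤ v (e k) := by
    intro k l hkl
    have := Tuple.monotone_sort (fun i => -v i) hkl
    simp only [Function.comp_apply] at this
    linarith
  set w : Fin N → ℝ := fun k => max (v (e k)) 0 with hw
  have hw0 : ∀ k, 0 ≤ w k := fun k => le_max_right _ _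
  have hwa : ∀ k l : Fin N, k ≤ l → w l ≤ w k := fun k l hkl =>
    max_le_max (hve k l hkl) le_rfl
  set K : Finset (Fin N) := univ.filter (fun k : Fin N => (k : ℕ) < c ∧ 0 < v (e k)) with hK
  set S : Finset (Fin N) := K.image (fun k => e k) with hS
  set σ : Fin N → Fin N := fun i => e.symm i with hσ
  have hKsub : K ⊆ univ.filter (fun k : Fin N => (k : ℕ) < c) := by
    intro k hk
    simp only [hK, Finset.mem_filter, Finset.mem_univ, true_and] at hk ⊢
    exact hk.1
  have hfiltc : (univ.filter (fun k : Fin N => (k : ℕ) < c)).card ≤ c := by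
    have := Finset.card_le_card_of_injOn (fun p : Fin N => (p : ℕ))
      (s := univ.filter (fun k : Fin N => (k : ℕ) < c)) (t := Finset.range c)
      (fun p hp => by
        simp only [Finset.mem_coe, Finset.mem_filter, Finset.mem_univ, true_and] at hp
        simpa using hp)
      (fun a _ b _ h => Fin.ext h)
    simpa using this
  have hScard : S.card ≤ c := by
    calc S.card ≤ K.card := Finset.card_image_le
      _ ≤ _ := le_trans (Finset.card_le_card hKsub) hfiltc
  have hSinj : Set.InjOn σ ↑S := fun a _ b _ h => e.symm.injective h
  -- g(S,σ) equals the greedy value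
  have hgS : ∑ i ∈ S, θ (σ i) * v i
      = ∑ k ∈ univ.filter (fun k : Fin N => (k : ℕ) < c), θ k * w k := by
    rw [hS, Finset.sum_image (fun a _ b _ h => e.injective h)]
    rw [← Finset.sum_subset hKsub (fun k _ hk => ?_)]
    · refine Finset.sum_congr rfl fun k hk => ?_
      simp only [hK, Finset.mem_filter, Finset.mem_univ, true_and] at hk
      simp only [hσ, Equiv.symm_apply_apply, hw]
      rw [max_eq_left (le_of_lt hk.2)]
    · simp only [hK, Finset.mem_filter, Finset.mem_univ, true_and, not_and] at hk
      have hkc : (k : ℕ) < c := by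
        simp only [Finset.mem_filter, Finset.mem_univ, true_and] at *
        assumption
      have : ¬ 0 < v (e k) := hk hkc
      simp only [hw]
      rw [max_eq_right (not_lt.mp this)]
      ring
  -- f(S) equals the greedy linear value
  have hfS : ∑ i ∈ S, v i
      = ∑ k ∈ univ.filter (fun k : Fin N => (k : ℕ) < c), w k := by
    rw [hS, Finset.sum_image (fun a _ b _ h => e.injective h)]
    rw [← Finset.sum_subset hKsub (fun k hk1 hk => ?_)]
    · refine Finset.sum_congr rfl fun k hk => ?_
      simp only [hK, Finset.mem_filter, Finset.mem_univ, true_and] at hk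
      simp only [hw]
      rw [max_eq_left (le_of_lt hk.2)]
    · simp only [hK, Finset.mem_filter, Finset.mem_univ, true_and, not_and] at hk
      have hkc : (k : ℕ) < c := by
        simp only [Finset.mem_filter, Finset.mem_univ, true_and] at hk1
        exact hk1
      have : ¬ 0 < v (e k) := hk hkc
      simp only [hw]
      rw [max_eq_right (not_lt.mp this)]
  -- (S,σ) is optimal
  have hopt : lam ≤ expProfit u r θ S σ := by
    rw [aux_equiv u r θ hu hθpos S σ lam]
    have h1 : lam ≤ ∑ i ∈ p₀.1, θ (p₀.2 i) * (u i * (r i - lam)) :=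
      (aux_equiv u r θ hu hθpos p₀.1 p₀.2 lam).mp le_rfl
    have h2 : ∑ i ∈ p₀.1, θ (p₀.2 i) * v i
        ≤ ∑ k ∈ univ.filter (fun k : Fin N => (k : ℕ) < c), θ k * w k :=
      aux_main c θ v hθpos hθ e hve p₀.1 p₀.2 hp₀mem.1 hp₀mem.2
    calc lam ≤ ∑ i ∈ p₀.1, θ (p₀.2 i) * v i := h1
      _ ≤ _ := h2
      _ = ∑ i ∈ S, θ (σ i) * v i := hgS.symm
  refine ⟨lam, S, σ, hScard, hSinj, ?_, ?_⟩
  · intro S' σ' h1 h2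
    exact le_trans (hle S' σ' h1 h2) hopt
  · intro S' hS'
    have h1 : ∑ i ∈ S', v i ≤ ∑ i ∈ S', w (e.symm i) := by
      refine Finset.sum_le_sum fun i _ => ?_
      have : v i = v (e (e.symm i)) := by rw [Equiv.apply_symm_apply]
      rw [this]
      exact le_max_left _ _
    have h2 : ∑ i ∈ S', w (e.symm i) = ∑ j ∈ S'.image (fun i => e.symm i), w j := by
      rw [Finset.sum_image (fun a _ b _ h => e.symm.injective h)]
    have h3 : (S'.image (fun i => e.symm i)).card ≤ c := by
      rw [Finset.card_image_of_injective _ e.symm.injective]; exact hS'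
    calc ∑ i ∈ S', u i * (r i - lam) = ∑ i ∈ S', v i := rfl
      _ ≤ ∑ j ∈ S'.image (fun i => e.symm i), w j := h1.trans_eq h2
      _ ≤ ∑ k ∈ univ.filter (fun k : Fin N => (k : ℕ) < c), w k :=
          aux_top w hw0 hwa _ _ h3
      _ = ∑ i ∈ S, v i := hfS.symm
      _ = ∑ i ∈ S, u i * (r i - lam) := rfl
end

section
/- Suppose θ_1 ≥ θ_2 ≥ ⋯ ≥ θ_N > 0 and let (S,σ) be an optimal solution of the CMLAPP with optimal value λ* = U(S,σ). Then r_i ≥ λ* for every product i ∈ S; that is, every displayed product's marginal profit is at least the optimal expected profit. -/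
/-- if `(S,σ)` is an optimal CMLAPP solution with optimal value
`λ* = U(S,σ)`, then `r_i ≥ λ*` for every displayed product `i ∈ S`. -/
theorem displayed_profit_ge_optimal (N c : ℕ) (hc : c ≤ N)
    (u r θ : Fin N → ℝ)
    (hu : ∀ i, 0 < u i) (hθpos : ∀ i, 0 < θ i)
    (hθ : ∀ i j : Fin N, i ≤ j → θ j ≤ θ i)
    (S : Finset (Fin N)) (σ : Fin N → Fin N)
    (hS : S.card ≤ c) (hσ : Set.InjOn σ ↑S)
    (hopt : ∀ (S' : Finset (Fin N)) (σ' : Fin N → Fin N),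
      S'.card ≤ c → Set.InjOn σ' ↑S' →
      expProfit u r θ S' σ' ≤ expProfit u r θ S σ) :
    ∀ i ∈ S, expProfit u r θ S σ ≤ r i := by
  intro i hi
  set w : Fin N → ℝ := fun j => θ (σ j) * u j with hw
  have hwpos : ∀ j, 0 < w j := fun j => mul_pos (hθpos _) (hu j)
  set D : ℝ := ∑ j ∈ S, w j + 1 with hD
  set D' : ℝ := ∑ j ∈ S.erase i, w j + 1 with hD'
  have hsplit : ∑ j ∈ S, w j = w i + ∑ j ∈ S.erase i, w j :=
    (Finset.add_sum_erase S w hi).symm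
  have hD'pos : 0 < D' := by
    have : (0:ℝ) ≤ ∑ j ∈ S.erase i, w j :=
      Finset.sum_nonneg fun j _ => (hwpos j).le
    linarith
  have hDpos : 0 < D := by
    have := hwpos i
    rw [hD, hsplit]; linarith
  set lam : ℝ := expProfit u r θ S σ with hlam
  have hlamD : ∑ j ∈ S, r j * w j = lam * D := by
    rw [hlam, expProfit, Finset.sum_congr rfl fun j _ => rfl]
    rw [Finset.sum_mul]
    apply Finset.sum_congr rfl
    intro j hj
    field_simp
    have hD0 : (∑ x ∈ S, θ (σ x) * u x + 1) = D := rfl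
    rw [hD0, mul_div_assoc, div_self hDpos.ne', mul_one]
    show r j * (θ (σ j) * u j) = r j * θ (σ j) * u j
    ring
  have hopt' := hopt (S.erase i) σ
    (le_trans (Finset.card_le_card (Finset.erase_subset i S)) hS)
    (hσ.mono (by exact_mod_cast Finset.erase_subset i S))
  have hE : expProfit u r θ (S.erase i) σ = (∑ j ∈ S.erase i, r j * w j) / D' := by
    rw [expProfit, Finset.sum_div]
    apply Finset.sum_congr rfl
    intro j hj
    rw [hD']; ring
  rw [hE] at hopt'
  have hkey : ∑ j ∈ S.erase i, r j * w j ≤ lam * D' :=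
    (div_le_iff₀ hD'pos).mp hopt'
  have hsum : r i * w i + ∑ j ∈ S.erase i, r j * w j = lam * D := by
    rw [← hlamD, Finset.add_sum_erase S (fun j => r j * w j) hi]
  have hDD' : D = w i + D' := by rw [hD, hD', hsplit]; ring
  have hmul : lam * D = lam * w i + lam * D' := by rw [hDD']; ring
  have h1 : lam * w i ≤ r i * w i := by linarith
  exact le_of_mul_le_mul_right h1 (hwpos i)
end

section
/- Let S be a finite index set and for j ∈ S let θ_j ≥ 0, u_j > 0, r_j ∈ ℝ and ε_j ≥ 0. Set Q = Σ_{j∈S} θ_j u_j + 1, R = Σ_{j∈S} θ_j u_j r_j and λ* = R/Q, and suppose r_j ≥ λ* for every j ∈ S. Then Σ_{j∈S} (θ_j u_j / Q) · (R + ε_j θ_j r_j)/(Q + ε_j θ_j) + (1/Q)·λ* ≥ λ*. In words: if the same assortment and position assignment are used at the next step, the expected profit at the next step conditional on the current step is at least the current expected profit. -/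
/-- core of Lemma 1: if every displayed product's marginal
profit is at least the current expected profit `λ* = R/Q`, then reusing the
same assortment and position assignment at the next step yields a conditional
expected profit at least `λ*`. -/
theorem social_influence_step_ge {ι : Type*} (S : Finset ι)
    (θ u r ε : ι → ℝ)
    (hθ : ∀ j ∈ S, 0 ≤ θ j) (hu : ∀ j ∈ S, 0 < u j) (hε : ∀ j ∈ S, 0 ≤ ε j)
    (Q R lam : ℝ)
    (hQ : Q = ∑ j ∈ S, θ j * u j + 1)
    (hR : R = ∑ j ∈ S, θ j * u j * r j)
    (hlam : lam = R / Q)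
    (hr : ∀ j ∈ S, lam ≤ r j) :
    lam ≤ (∑ j ∈ S, (θ j * u j / Q) * ((R + ε j * θ j * r j) / (Q + ε j * θ j)))
        + (1 / Q) * lam := by
  have hsum : 0 ≤ ∑ j ∈ S, θ j * u j :=
    Finset.sum_nonneg fun j hj => mul_nonneg (hθ j hj) (le_of_lt (hu j hj))
  have hQpos : 0 < Q := by rw [hQ]; linarith
  have key : ∀ j ∈ S, (θ j * u j / Q) * lam ≤
      (θ j * u j / Q) * ((R + ε j * θ j * r j) / (Q + ε j * θ j)) := by
    intro j hj
    apply mul_le_mul_of_nonneg_left _ (div_nonneg (mul_nonneg (hθ j hj) (hu j hj).le) hQpos.le)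
    have hεθ : 0 ≤ ε j * θ j := mul_nonneg (hε j hj) (hθ j hj)
    have hQε : 0 < Q + ε j * θ j := by linarith
    rw [hlam, div_le_div_iff₀ hQpos hQε]
    have hrj : R ≤ r j * Q := by
      have := hr j hj
      rw [hlam, div_le_iff₀ hQpos] at this
      linarith
    have : ε j * θ j * R ≤ ε j * θ j * (r j * Q) := mul_le_mul_of_nonneg_left hrj hεθ
    nlinarith
  have h1 : (∑ j ∈ S, θ j * u j / Q) + 1 / Q = 1 := by
    rw [← Finset.sum_div, ← add_div, ← hQ, div_self hQpos.ne']
  calc lam = (∑ j ∈ S, (θ j * u j / Q) * lam) + (1 / Q) * lam := by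
        rw [← Finset.sum_mul, ← add_mul, h1, one_mul]
    _ ≤ _ := add_le_add_left (Finset.sum_le_sum key) _
end

section
/- Suppose θ_1 ≥ θ_2 ≥ ⋯ ≥ θ_N > 0 and u_i > 0 for all i. Let (S*,σ*) be an optimal CMLAPP solution for utilities u with optimal value λ* = U(S*,σ*). For each j ∈ S* let ε_j ≥ 0 and let λ**_j denote the optimal CMLAPP value for the modified utilities in which u_j is replaced by u_j + ε_j (all other utilities unchanged). Then Σ_{j∈S*} P_j(S*,σ*) · λ**_j + P_0(S*,σ*) · λ* ≥ λ*. That is, under social influence the expected profit is non-decreasing over time when the optimal assortment and position assignment are used at every step. -/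
/-- Choice probability `P_i(S,σ)` for utilities `u`. -/
noncomputable def choiceProb {N : ℕ} (u θ : Fin N → ℝ)
    (S : Finset (Fin N)) (σ : Fin N → Fin N) (i : Fin N) : ℝ :=
  θ (σ i) * u i / (∑ j ∈ S, θ (σ j) * u j + 1)

/-- No-purchase probability `P_0(S,σ)` for utilities `u`. -/
noncomputable def noPurchase {N : ℕ} (u θ : Fin N → ℝ)
    (S : Finset (Fin N)) (σ : Fin N → Fin N) : ℝ :=
  1 / (∑ j ∈ S, θ (σ j) * u j + 1)

lemma expProfit_eq_div {N : ℕ} (v r θ : Fin N → ℝ)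
    (S : Finset (Fin N)) (σ : Fin N → Fin N) :
    expProfit v r θ S σ
      = (∑ i ∈ S, r i * (θ (σ i) * v i)) / ((∑ i ∈ S, θ (σ i) * v i) + 1) := by
  rw [expProfit, Finset.sum_div]
  exact Finset.sum_congr rfl fun i _ => (mul_div_assoc _ _ _).symm


/-- let `(S*,σ*)` be an optimal CMLAPP solution with value
`λ* = U(S*,σ*)`, and for each `j ∈ S*` let `λ**_j` be the optimal CMLAPP value
when `u_j` is increased to `u_j + ε_j` (all other utilities unchanged).  Then
`Σ_{j∈S*} P_j(S*,σ*) λ**_j + P_0(S*,σ*) λ* ≥ λ*`: under social influence the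
expected profit is non-decreasing over time when the optimal assortment and
position assignment are used at every step. -/
theorem social_influence_nondecreasing (N c : ℕ) (hc : c ≤ N)
    (u r θ : Fin N → ℝ)
    (hu : ∀ i, 0 < u i) (hθpos : ∀ i, 0 < θ i)
    (hθ : ∀ i j : Fin N, i ≤ j → θ j ≤ θ i)
    (ε : Fin N → ℝ) (hε : ∀ j, 0 ≤ ε j)
    (Sstar : Finset (Fin N)) (σstar : Fin N → Fin N)
    (hcard : Sstar.card ≤ c) (hinj : Set.InjOn σstar ↑Sstar)
    (lamStar : ℝ)
    (hlamStar : lamStar = expProfit u r θ Sstar σstar)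
    (hopt : IsGreatest {z : ℝ | ∃ (S : Finset (Fin N)) (σ : Fin N → Fin N),
        S.card ≤ c ∧ Set.InjOn σ ↑S ∧ z = expProfit u r θ S σ} lamStar)
    (lamStarStar : Fin N → ℝ)
    (hlamStarStar : ∀ j ∈ Sstar,
      IsGreatest {z : ℝ | ∃ (S : Finset (Fin N)) (σ : Fin N → Fin N),
        S.card ≤ c ∧ Set.InjOn σ ↑S ∧
        z = expProfit (Function.update u j (u j + ε j)) r θ S σ}
        (lamStarStar j)) :
    lamStar ≤ (∑ j ∈ Sstar, choiceProb u θ Sstar σstar j * lamStarStar j)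
        + noPurchase u θ Sstar σstar * lamStar := by
  classical
  set D : ℝ := ∑ j ∈ Sstar, θ (σstar j) * u j + 1 with hDdef
  have hsum_nonneg : 0 ≤ ∑ j ∈ Sstar, θ (σstar j) * u j :=
    Finset.sum_nonneg fun i _ => le_of_lt (mul_pos (hθpos _) (hu _))
  have hDpos : 0 < D := by rw [hDdef]; linarith
  -- key: lamStar ≤ lamStarStar j for each j ∈ Sstar
  have hkey : ∀ j ∈ Sstar, lamStar ≤ lamStarStar j := by
    intro j hj
    set u' := Function.update u j (u j + ε j) with hu'
    set A : ℝ := ∑ i ∈ Sstar.erase j, r i * (θ (σstar i) * u i) with hAdef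
    set B : ℝ := (∑ i ∈ Sstar.erase j, θ (σstar i) * u i) + 1 with hBdef
    have hBpos : 0 < B := by
      have : 0 ≤ ∑ i ∈ Sstar.erase j, θ (σstar i) * u i :=
        Finset.sum_nonneg fun i _ => le_of_lt (mul_pos (hθpos _) (hu _))
      rw [hBdef]; linarith
    have hx : 0 < θ (σstar j) * u j := mul_pos (hθpos _) (hu _)
    have hx' : θ (σstar j) * u j ≤ θ (σstar j) * (u j + ε j) := by
      have := hε j
      nlinarith [le_of_lt (hθpos (σstar j))]
    -- sums split at j
    have hsplitr : ∀ v : Fin N → ℝ, (∀ i ∈ Sstar.erase j, v i = u i) →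
        (∑ i ∈ Sstar, r i * (θ (σstar i) * v i))
          = r j * (θ (σstar j) * v j) + A := by
      intro v hv
      rw [hAdef, ← Finset.add_sum_erase _ _ hj]
      congr 1
      exact Finset.sum_congr rfl fun i hi => by rw [hv i hi]
    have hsplitd : ∀ v : Fin N → ℝ, (∀ i ∈ Sstar.erase j, v i = u i) →
        ((∑ i ∈ Sstar, θ (σstar i) * v i) + 1)
          = θ (σstar j) * v j + B := by
      intro v hv
      rw [hBdef, ← Finset.add_sum_erase _ _ hj, add_assoc]
      congr 2
      exact Finset.sum_congr rfl fun i hi => by rw [hv i hi]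
    have hu'erase : ∀ i ∈ Sstar.erase j, u' i = u i := by
      intro i hi
      exact Function.update_of_ne (Finset.ne_of_mem_erase hi) _ _
    have hu'j : u' j = u j + ε j := Function.update_self _ _ _
    -- lamStar as g(u j)
    have hlam_g : lamStar = (r j * (θ (σstar j) * u j) + A) / (θ (σstar j) * u j + B) := by
      rw [hlamStar, expProfit_eq_div, hsplitr u (fun _ _ => rfl), hsplitd u (fun _ _ => rfl)]
    -- value of (Sstar, σstar) under u'
    have hval1 : expProfit u' r θ Sstar σstar
        = (r j * (θ (σstar j) * (u j + ε j)) + A) / (θ (σstar j) * (u j + ε j) + B) := by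
      rw [expProfit_eq_div, hsplitr u' hu'erase, hsplitd u' hu'erase, hu'j]
    -- value of (Sstar.erase j, σstar) under u'
    have hval2 : expProfit u' r θ (Sstar.erase j) σstar = A / B := by
      rw [expProfit_eq_div, hAdef, hBdef]
      congr 1
      · exact Finset.sum_congr rfl fun i hi => by rw [hu'erase i hi]
      · congr 1
        exact Finset.sum_congr rfl fun i hi => by rw [hu'erase i hi]
    have hub := (hlamStarStar j hj).2
    have h1 : expProfit u' r θ Sstar σstar ≤ lamStarStar j :=
      hub ⟨Sstar, σstar, hcard, hinj, rfl⟩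
    have h2 : expProfit u' r θ (Sstar.erase j) σstar ≤ lamStarStar j :=
      hub ⟨Sstar.erase j, σstar,
        le_trans (Finset.card_le_card (Finset.erase_subset _ _)) hcard,
        hinj.mono (by exact_mod_cast Finset.erase_subset j Sstar), rfl⟩
    by_cases hcase : A ≤ r j * B
    · -- g nondecreasing: g(u j) ≤ g(u j + ε j)
      have hd1 : 0 < θ (σstar j) * u j + B := by linarith
      have hd2 : 0 < θ (σstar j) * (u j + ε j) + B := by linarith
      have hmono : (r j * (θ (σstar j) * u j) + A) / (θ (σstar j) * u j + B)
          ≤ (r j * (θ (σstar j) * (u j + ε j)) + A) / (θ (σstar j) * (u j + ε j) + B) := by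
        rw [div_le_div_iff₀ hd1 hd2]
        nlinarith [hx', sub_nonneg.mpr hx']
      calc lamStar ≤ expProfit u' r θ Sstar σstar := by rw [hlam_g, hval1]; exact hmono
        _ ≤ lamStarStar j := h1
    · push_neg at hcase
      have hd1 : 0 < θ (σstar j) * u j + B := by linarith
      have hmono : (r j * (θ (σstar j) * u j) + A) / (θ (σstar j) * u j + B) ≤ A / B := by
        rw [div_le_div_iff₀ hd1 hBpos]
        nlinarith [le_of_lt hx]
      calc lamStar ≤ expProfit u' r θ (Sstar.erase j) σstar := by
            rw [hlam_g, hval2]; exact hmono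
        _ ≤ lamStarStar j := h2
  -- now combine
  have hprob_nonneg : ∀ j ∈ Sstar, 0 ≤ choiceProb u θ Sstar σstar j := by
    intro j hj
    exact div_nonneg (le_of_lt (mul_pos (hθpos _) (hu _))) (le_of_lt hDpos)
  have hsum_ge : ∑ j ∈ Sstar, choiceProb u θ Sstar σstar j * lamStar
      ≤ ∑ j ∈ Sstar, choiceProb u θ Sstar σstar j * lamStarStar j :=
    Finset.sum_le_sum fun j hj =>
      mul_le_mul_of_nonneg_left (hkey j hj) (hprob_nonneg j hj)
  have htotal : (∑ j ∈ Sstar, choiceProb u θ Sstar σstar j) + noPurchase u θ Sstar σstar = 1 := by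
    simp only [choiceProb, noPurchase, ← Finset.sum_div]
    rw [← add_div, div_self (ne_of_gt hDpos)]
  have hexp : ∑ j ∈ Sstar, choiceProb u θ Sstar σstar j * lamStar
      = (∑ j ∈ Sstar, choiceProb u θ Sstar σstar j) * lamStar := by
    rw [Finset.sum_mul]
  calc lamStar = ((∑ j ∈ Sstar, choiceProb u θ Sstar σstar j)
        + noPurchase u θ Sstar σstar) * lamStar := by rw [htotal, one_mul]
    _ = ∑ j ∈ Sstar, choiceProb u θ Sstar σstar j * lamStar
        + noPurchase u θ Sstar σstar * lamStar := by rw [hexp, add_mul]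
    _ ≤ (∑ j ∈ Sstar, choiceProb u θ Sstar σstar j * lamStarStar j)
        + noPurchase u θ Sstar σstar * lamStar := by linarith
end
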